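/- arXiv:1808.04732 — 2 statements merged into one kernel-verified Lean document; each statement's English description precedes it below -/
import Mathlib

section
/- Let P be a perfect poset, let T ∈ P, and let s ∈ T. Then T_s = T ∧ C_s, and consequently T_s ∈ P; that is, every perfect poset is closed under restriction to a node. -/
/-- A tree: a set of finite binary strings closed under initial segments (prefixes). -/
def IsTree (T : Set (List Bool)) : Prop :=
  ∀ ⦃s t : List Bool⦄, s <+: t → t ∈ T → s ∈ T

/-- A node `t` splits in a set `A` of strings if both one-step extensions belong to `A`. -/
def Splits (A : Set (List Bool)) (t : List Bool) : Prop :=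
  t ++ [false] ∈ A ∧ t ++ [true] ∈ A

/-- A perfect tree: a nonempty tree each of whose elements has a splitting extension in it. -/
def IsPerfect (T : Set (List Bool)) : Prop :=
  T.Nonempty ∧ IsTree T ∧ ∀ s ∈ T, ∃ t ∈ T, s <+: t ∧ Splits T t

/-- The cone `C_s`: all strings comparable with `s`. -/
def Cone (s : List Bool) : Set (List Bool) :=
  {t | s <+: t ∨ t <+: s}

/-- `T_s`: the elements of `T` comparable with `s`. -/
def restrictTo (T : Set (List Bool)) (s : List Bool) : Set (List Bool) :=
  {t ∈ T | s <+: t ∨ t <+: s}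

/-- The meet `A ∧ B`: the union of all perfect trees contained in `A ∩ B`. -/
def meet (A B : Set (List Bool)) : Set (List Bool) :=
  ⋃₀ {U | IsPerfect U ∧ U ⊆ A ∩ B}

/-- A perfect poset: a collection of perfect trees containing all cones and
closed under unions and (nonempty) meets. -/
def PerfectPoset (P : Set (Set (List Bool))) : Prop :=
  (∀ T ∈ P, IsPerfect T) ∧
  (∀ s : List Bool, Cone s ∈ P) ∧
  (∀ T ∈ P, ∀ S ∈ P, T ∪ S ∈ P) ∧
  (∀ T ∈ P, ∀ S ∈ P, meet T S ≠ ∅ → meet T S ∈ P)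

/-- `T` and `S` are compatible in `P` if some `U ∈ P` is contained in both. -/
def CompatIn (P : Set (Set (List Bool))) (T S : Set (List Bool)) : Prop :=
  ∃ U ∈ P, U ⊆ T ∧ U ⊆ S


lemma restrict_perfect {T : Set (List Bool)} (hT : IsPerfect T) {s : List Bool}
    (hs : s ∈ T) : IsPerfect (restrictTo T s) := by
  obtain ⟨-, htree, hsplit⟩ := hT
  refine ⟨⟨s, hs, Or.inl List.prefix_rfl⟩, ?_, ?_⟩
  · rintro u t hut ⟨htT, ht⟩
    refine ⟨htree hut htT, ?_⟩
    rcases ht with h | h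
    · exact List.prefix_or_prefix_of_prefix h hut
    · exact Or.inr (hut.trans h)
  · rintro t ⟨htT, ht⟩
    have key : ∀ t' ∈ T, s <+: t' → ∃ u ∈ restrictTo T s, t' <+: u ∧ Splits (restrictTo T s) u := by
      intro t' ht' hst'
      obtain ⟨u, huT, htu, hsp⟩ := hsplit t' ht'
      have hsu : s <+: u := hst'.trans htu
      refine ⟨u, ⟨huT, Or.inl hsu⟩, htu, ⟨hsp.1, Or.inl (hsu.trans ⟨[false], rfl⟩)⟩,
        ⟨hsp.2, Or.inl (hsu.trans ⟨[true], rfl⟩)⟩⟩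
    rcases ht with h | h
    · obtain ⟨u, hu, htu, hsp⟩ := key t htT h
      exact ⟨u, hu, htu, hsp⟩
    · obtain ⟨u, hu, hsu, hsp⟩ := key s hs List.prefix_rfl
      exact ⟨u, hu, h.trans hsu, hsp⟩

/-- `T_s = T ∧ C_s`, so perfect posets are closed under restriction
to a node. -/
theorem perfectPoset_closed_under_restrict (P : Set (Set (List Bool)))
    (hP : PerfectPoset P) (T : Set (List Bool)) (hT : T ∈ P)
    (s : List Bool) (hs : s ∈ T) :
    restrictTo T s = meet T (Cone s) ∧ restrictTo T s ∈ P := by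
  have hperf : IsPerfect (restrictTo T s) := restrict_perfect (hP.1 T hT) hs
  have heq : restrictTo T s = meet T (Cone s) := by
    apply Set.Subset.antisymm
    · intro t ht
      exact ⟨restrictTo T s, ⟨hperf, fun u hu => ⟨hu.1, hu.2⟩⟩, ht⟩
    · rintro t ⟨U, ⟨-, hUsub⟩, htU⟩
      exact ⟨(hUsub htU).1, (hUsub htU).2⟩
  refine ⟨heq, ?_⟩
  rw [heq]
  apply hP.2.2.2 T hT (Cone s) (hP.2.1 s)
  rw [← heq]
  intro hempty
  exact absurd (hperf.1) (by rw [hempty]; simp [Set.not_nonempty_empty])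
end

section
/- Let P be a perfect poset, let T, S ∈ P, let m ∈ ℕ, and suppose T ∧ S ≠ ∅. Then there exist a node s of T of length m and a tree T̄ ∈ P such that T̄ ⊆ T, T̄ has exactly the same nodes of length m as T, and T̄_s ⊆ S. -/
/-- A perfect tree contains arbitrarily long elements. -/
lemma IsPerfect.exists_long {M : Set (List Bool)} (hM : IsPerfect M) :
    ∀ n : ℕ, ∃ u ∈ M, n ≤ u.length := by
  intro n
  induction n with
  | zero => obtain ⟨u, hu⟩ := hM.1; exact ⟨u, hu, Nat.zero_le _⟩
  | succ n ih =>
    obtain ⟨u, hu, hlen⟩ := ih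
    obtain ⟨t, htM, hut, hsplit⟩ := hM.2.2 u hu
    refine ⟨t ++ [true], hsplit.2, ?_⟩
    have h1 : u.length ≤ t.length := hut.length_le
    simp only [List.length_append, List.length_cons, List.length_nil]
    omega

lemma restrictTo_isPerfect {U : Set (List Bool)} {s : List Bool}
    (hU : IsPerfect U) (hs : s ∈ U) : IsPerfect (restrictTo U s) := by
  refine ⟨⟨s, hs, Or.inl List.prefix_rfl⟩, ?_, ?_⟩
  · rintro a b hab ⟨hbU, hb⟩
    refine ⟨hU.2.1 hab hbU, ?_⟩
    rcases hb with hb | hb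
    · rcases List.prefix_or_prefix_of_prefix hab hb with h | h
      · exact Or.inr h
      · exact Or.inl h
    · exact Or.inr (hab.trans hb)
  · rintro a ⟨haU, ha⟩
    rcases ha with ha | ha
    · -- s <+: a
      obtain ⟨t, htU, hat, hsplit⟩ := hU.2.2 a haU
      have hst : s <+: t := ha.trans hat
      refine ⟨t, ⟨htU, Or.inl hst⟩, hat, ⟨hsplit.1, Or.inl (hst.trans (List.prefix_append _ _))⟩,
        ⟨hsplit.2, Or.inl (hst.trans (List.prefix_append _ _))⟩⟩
    · -- a <+: s
      obtain ⟨t, htU, hst, hsplit⟩ := hU.2.2 s hs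
      refine ⟨t, ⟨htU, Or.inl hst⟩, ha.trans hst, ⟨hsplit.1, Or.inl (hst.trans (List.prefix_append _ _))⟩,
        ⟨hsplit.2, Or.inl (hst.trans (List.prefix_append _ _))⟩⟩

lemma meet_subset {A B : Set (List Bool)} : meet A B ⊆ A ∩ B := by
  rintro u ⟨U, ⟨_, hsub⟩, hu⟩
  exact hsub hu

lemma restrictTo_eq_meet_cone {U : Set (List Bool)} {s : List Bool}
    (hU : IsPerfect U) (hs : s ∈ U) : meet U (Cone s) = restrictTo U s := by
  apply Set.Subset.antisymm
  · intro u hu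
    have := meet_subset hu
    exact ⟨this.1, this.2⟩
  · intro u hu
    exact ⟨restrictTo U s, ⟨restrictTo_isPerfect hU hs, fun v hv => ⟨hv.1, hv.2⟩⟩, hu⟩

lemma restrictTo_mem {P : Set (Set (List Bool))} (hP : PerfectPoset P)
    {U : Set (List Bool)} {s : List Bool} (hUP : U ∈ P) (hs : s ∈ U) :
    restrictTo U s ∈ P := by
  have hU := hP.1 U hUP
  have heq := restrictTo_eq_meet_cone hU hs
  have hne : meet U (Cone s) ≠ ∅ := by
    rw [heq]
    intro hc
    have : s ∈ restrictTo U s := ⟨hs, Or.inl List.prefix_rfl⟩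
    rw [hc] at this
    exact this
  have := hP.2.2.2 U hUP (Cone s) (hP.2.1 s) hne
  rwa [heq] at this

lemma union_biUnion_mem {P : Set (Set (List Bool))} (hP : PerfectPoset P)
    {A : Set (List Bool)} (hA : A ∈ P) {ι : Type} (F : Finset ι)
    (f : ι → Set (List Bool)) (hf : ∀ i ∈ F, f i ∈ P) :
    A ∪ ⋃ i ∈ F, f i ∈ P := by
  classical
  induction F using Finset.induction_on with
  | empty => simpa using hA
  | @insert a s hnotmem ih =>
    have hf' : ∀ i ∈ s, f i ∈ P := fun i hi => hf i (Finset.mem_insert_of_mem hi)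
    have h1 : A ∪ ⋃ i ∈ insert a s, f i = (A ∪ ⋃ i ∈ s, f i) ∪ f a := by
      ext x
      simp only [Set.mem_union, Set.mem_iUnion, Finset.mem_insert]
      constructor
      · rintro (hx | ⟨i, (rfl | hi), hxi⟩)
        · exact Or.inl (Or.inl hx)
        · exact Or.inr hxi
        · exact Or.inl (Or.inr ⟨i, hi, hxi⟩)
      · rintro ((hx | ⟨i, hi, hxi⟩) | hx)
        · exact Or.inl hx
        · exact Or.inr ⟨i, Or.inr hi, hxi⟩
        · exact Or.inr ⟨a, Or.inl rfl, hx⟩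
    rw [h1]
    exact hP.2.2.1 _ (ih hf') _ (hf a (Finset.mem_insert_self a s))

/-- if `T ∧ S ≠ ∅`, one can shrink `T` in `P`, preserving its nodes of
length `m`, so that below some length-`m` node the result is contained in `S`. -/
theorem shrink_into_compatible (P : Set (Set (List Bool)))
    (hP : PerfectPoset P) (T S : Set (List Bool)) (hT : T ∈ P) (hS : S ∈ P)
    (m : ℕ) (h : meet T S ≠ ∅) :
    ∃ s ∈ T, s.length = m ∧ ∃ Tbar ∈ P, Tbar ⊆ T ∧
      {t ∈ Tbar | t.length = m} = {t ∈ T | t.length = m} ∧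
      restrictTo Tbar s ⊆ S := by
  classical
  set M := meet T S with hMdef
  have hMP : M ∈ P := hP.2.2.2 T hT S hS h
  have hMperf : IsPerfect M := hP.1 M hMP
  have hMsubT : M ⊆ T := fun u hu => (meet_subset hu).1
  have hMsubS : M ⊆ S := fun u hu => (meet_subset hu).2
  -- find s of length m in M
  obtain ⟨u, huM, hulen⟩ := hMperf.exists_long m
  set s := u.take m with hsdef
  have hsM : s ∈ M := hMperf.2.1 (List.take_prefix m u) huM
  have hslen : s.length = m := by
    simp [hsdef, List.length_take]; omega
  have hsT : s ∈ T := hMsubT hsM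
  have hsS : s ∈ S := hMsubS hsM
  refine ⟨s, hsT, hslen, ?_⟩
  -- the finset of other length-m nodes of T
  set F : Finset (List.Vector Bool m) :=
    Finset.univ.filter (fun v => v.toList ∈ T ∧ v.toList ≠ s) with hFdef
  set Tbar : Set (List Bool) :=
    restrictTo M s ∪ ⋃ v ∈ F, restrictTo T v.toList with hTbardef
  have hTbarP : Tbar ∈ P := by
    apply union_biUnion_mem hP (restrictTo_mem hP hMP hsM)
    intro v hv
    have hvT : v.toList ∈ T := by
      simp only [hFdef, Finset.mem_filter] at hv
      exact hv.2.1
    exact restrictTo_mem hP hT hvT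
  have hTbarsubT : Tbar ⊆ T := by
    rintro x (hx | hx)
    · exact hMsubT hx.1
    · simp only [Set.mem_iUnion] at hx
      obtain ⟨v, _, hxv⟩ := hx
      exact hxv.1
  refine ⟨Tbar, hTbarP, hTbarsubT, ?_, ?_⟩
  · -- same nodes of length m
    apply Set.Subset.antisymm
    · rintro x ⟨hx, hxlen⟩
      exact ⟨hTbarsubT hx, hxlen⟩
    · rintro x ⟨hxT, hxlen⟩
      by_cases hxs : x = s
      · subst hxs
        exact ⟨Or.inl ⟨hsM, Or.inl List.prefix_rfl⟩, hxlen⟩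
      · refine ⟨Or.inr ?_, hxlen⟩
        refine Set.mem_iUnion.2 ⟨⟨x, hxlen⟩, ?_⟩
        refine Set.mem_iUnion.2 ⟨?_, ⟨hxT, Or.inl List.prefix_rfl⟩⟩
        rw [hFdef]; exact Finset.mem_filter.2 ⟨Finset.mem_univ _, hxT, hxs⟩
  · -- restrictTo Tbar s ⊆ S
    rintro x ⟨hxTbar, hxs⟩
    rcases hxTbar with hx | hx
    · exact hMsubS hx.1
    · simp only [Set.mem_iUnion] at hx
      obtain ⟨v, hvF, hxT', hxv⟩ := hx
      have hvlen : v.toList.length = m := v.2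
      have hvne : v.toList ≠ s := by
        simp only [hFdef, Finset.mem_filter] at hvF
        exact hvF.2.2
      rcases hxs with hxs | hxs
      · -- s <+: x
        exfalso
        rcases hxv with hxv | hxv
        · -- v.toList <+: x : two same-length prefixes of x
          rcases List.prefix_or_prefix_of_prefix hxv hxs with h1 | h1
          · exact hvne (h1.eq_of_length (by rw [hvlen, hslen]))
          · exact hvne ((h1.eq_of_length (by rw [hvlen, hslen])).symm)
        · -- x <+: v.toList and s <+: x : lengths force equality
          have h1 : s.length ≤ x.length := hxs.length_le
          have h2 : x.length ≤ v.toList.length := hxv.length_le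
          have hx_eq_v : x = v.toList := hxv.eq_of_length (by omega)
          have hs_eq_x : s = x := hxs.eq_of_length (by omega)
          exact hvne (hx_eq_v ▸ hs_eq_x ▸ rfl)
      · -- x <+: s : x ∈ S since S is a tree and s ∈ S
        exact (hP.1 S hS).2.1 hxs hsS
end
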